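/- arXiv:2411.13887 — 3 statements merged into one kernel-verified Lean document; each statement's English description precedes it below -/
import Mathlib

section
/- The canonical isomorphism between harmonic space and cohomology: the composition of the inclusion ker(Δ_p) ↪ ker(δ_p) with the quotient projection ker(δ_p) → ker(δ_p)/im(δ_{p-1}) is a linear isomorphism from ker(Δ_p) onto the p-th cohomology H^p = ker(δ_p)/im(δ_{p-1}). -/
open scoped RealInnerProductSpace


/-- The canonical isomorphism between harmonic space and
cohomology: the composition of the inclusion `ker(Δ_p) ↪ ker(δ_p)` with the
quotient projection `ker(δ_p) → ker(δ_p)/im(δ_{p-1})` is a linear isomorphism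
from `ker(Δ_p)` onto `H^p = ker(δ_p)/im(δ_{p-1})`. -/
theorem harmonic_iso_cohomology
    {Vpm1 Vp Vpp1 : Type*}
    [NormedAddCommGroup Vpm1] [InnerProductSpace ℝ Vpm1] [FiniteDimensional ℝ Vpm1]
    [NormedAddCommGroup Vp] [InnerProductSpace ℝ Vp] [FiniteDimensional ℝ Vp]
    [NormedAddCommGroup Vpp1] [InnerProductSpace ℝ Vpp1] [FiniteDimensional ℝ Vpp1]
    (δpm1 : Vpm1 →ₗ[ℝ] Vp) (δp : Vp →ₗ[ℝ] Vpp1)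
    (hcomplex : δp ∘ₗ δpm1 = 0)
    (Δp : Vp →ₗ[ℝ] Vp)
    (hΔ : Δp = LinearMap.adjoint δp ∘ₗ δp + δpm1 ∘ₗ LinearMap.adjoint δpm1) :
    ∃ hle : LinearMap.ker Δp ≤ LinearMap.ker δp,
      Function.Bijective
        ((Submodule.mkQ
            ((LinearMap.range δpm1).comap (LinearMap.ker δp).subtype)) ∘ₗ
          Submodule.inclusion hle) := by
  have key : ∀ x : Vp, Δp x = 0 → δp x = 0 ∧ LinearMap.adjoint δpm1 x = 0 := by
    intro x hx
    have h0 : ⟪δp x, δp x⟫ + ⟪LinearMap.adjoint δpm1 x, LinearMap.adjoint δpm1 x⟫ = 0 := by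
      have h1 : ⟪Δp x, x⟫ = 0 := by rw [hx, inner_zero_left]
      rw [hΔ, LinearMap.add_apply, inner_add_left, LinearMap.comp_apply, LinearMap.comp_apply,
        LinearMap.adjoint_inner_left] at h1
      rw [← h1]
      congr 1
      rw [LinearMap.adjoint_inner_right]
    have hδ : ⟪δp x, δp x⟫ = 0 := by
      have := real_inner_self_nonneg (x := δp x)
      have := real_inner_self_nonneg (x := LinearMap.adjoint δpm1 x)
      linarith
    have hδ' : ⟪LinearMap.adjoint δpm1 x, LinearMap.adjoint δpm1 x⟫ = 0 := by linarith
    exact ⟨inner_self_eq_zero.mp hδ, inner_self_eq_zero.mp hδ'⟩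
  have hle : LinearMap.ker Δp ≤ LinearMap.ker δp := by
    intro x hx
    exact LinearMap.mem_ker.mpr (key x (LinearMap.mem_ker.mp hx)).1
  refine ⟨hle, ?_, ?_⟩
  · -- injective
    rw [← LinearMap.ker_eq_bot, LinearMap.ker_eq_bot']
    intro m hm
    have hmem : ((Submodule.inclusion hle m : LinearMap.ker δp) : Vp) ∈ LinearMap.range δpm1 := by
      have := (Submodule.Quotient.mk_eq_zero _).mp hm
      simpa using this
    obtain ⟨y, hy⟩ := hmem
    have hadj := (key m (LinearMap.mem_ker.mp m.2)).2
    have hinner : ⟪(m : Vp), (m : Vp)⟫ = 0 := by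
      have hcoe : ((Submodule.inclusion hle m : LinearMap.ker δp) : Vp) = (m : Vp) := rfl
      rw [hcoe] at hy
      calc ⟪(m : Vp), (m : Vp)⟫ = ⟪δpm1 y, (m : Vp)⟫ := by rw [hy]
        _ = ⟪y, LinearMap.adjoint δpm1 (m : Vp)⟫ :=
            (LinearMap.adjoint_inner_right δpm1 y (m : Vp)).symm
        _ = 0 := by rw [hadj, inner_zero_right]
    have : (m : Vp) = 0 := inner_self_eq_zero.mp hinner
    exact Subtype.ext this
  · -- surjective
    intro q
    obtain ⟨z, rfl⟩ := Submodule.Quotient.mk_surjective _ q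
    obtain ⟨a, ha, b, hb, hab⟩ :=
      Submodule.exists_add_mem_mem_orthogonal (K := LinearMap.range δpm1) (z : Vp)
    have hrange_le : LinearMap.range δpm1 ≤ LinearMap.ker δp := by
      rintro _ ⟨y, rfl⟩
      exact LinearMap.mem_ker.mpr (by simpa using DFunLike.congr_fun hcomplex y)
    have hbker : δp b = 0 := by
      have hza : δp a = 0 := hrange_le ha
      have hz : δp (z : Vp) = 0 := z.2
      have : δp ((z : Vp) - a) = 0 := by rw [map_sub, hz, hza, sub_zero]
      have hb' : b = (z : Vp) - a := by rw [hab]; abel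
      rwa [hb']
    have hbadj : LinearMap.adjoint δpm1 b = 0 := by
      apply (inner_self_eq_zero (𝕜 := ℝ)).mp
      rw [LinearMap.adjoint_inner_left, real_inner_comm]
      exact (Submodule.mem_orthogonal _ _).mp hb _ ⟨_, rfl⟩
    have hbharm : b ∈ LinearMap.ker Δp := by
      rw [LinearMap.mem_ker, hΔ]
      simp [LinearMap.add_apply, LinearMap.comp_apply, hbker, hbadj]
    refine ⟨⟨b, hbharm⟩, ?_⟩
    simp only [LinearMap.comp_apply, Submodule.mkQ_apply]
    rw [Submodule.Quotient.eq]
    have : ((Submodule.inclusion hle ⟨b, hbharm⟩ : LinearMap.ker δp) : Vp) = b := rfl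
    refine Submodule.mem_comap.mpr ?_
    have : ((Submodule.inclusion hle ⟨b, hbharm⟩ - z : LinearMap.ker δp) : Vp) = b - z := rfl
    rw [Submodule.subtype_apply, this]
    have : b - (z : Vp) = -a := by rw [hab]; abel
    rw [this]
    exact neg_mem ha
end

section
/- Existence of the maximal subdominant ultrametric: let X be a finite nonempty set and let d : X × X → ℝ be a metric on X (nonnegative, vanishing exactly on the diagonal, symmetric, satisfying the triangle inequality). Then there exists an ultrametric u : X × X → ℝ on X such that u(x,y) ≤ d(x,y) for all x, y ∈ X, and such that for every ultrametric u' on X with u'(x,y) ≤ d(x,y) for all x, y, one has u'(x,y) ≤ u(x,y) for all x, y ∈ X. -/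
/-- Cost of a path from `x` to `y` through intermediate points `l`:
the maximum of the `d`-lengths of consecutive edges. -/
noncomputable def pathCost {X : Type*} (d : X → X → ℝ) : X → List X → X → ℝ
  | x, [], y => d x y
  | x, a :: l, y => max (d x a) (pathCost d a l y)

theorem pathCost_nil {X : Type*} (d : X → X → ℝ) (x y : X) :
    pathCost d x [] y = d x y := rfl

theorem pathCost_cons {X : Type*} (d : X → X → ℝ) (x a y : X) (l : List X) :
    pathCost d x (a :: l) y = max (d x a) (pathCost d a l y) := rfl

theorem pathCost_mem_range {X : Type*} (d : X → X → ℝ) :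
    ∀ (l : List X) (x y : X), ∃ a b, pathCost d x l y = d a b := by
  intro l
  induction l with
  | nil => intro x y; exact ⟨x, y, rfl⟩
  | cons a l ih =>
    intro x y
    obtain ⟨p, q, hpq⟩ := ih a y
    rcases max_choice (d x a) (pathCost d a l y) with h | h
    · exact ⟨x, a, h⟩
    · exact ⟨p, q, by rw [pathCost_cons, h, hpq]⟩

theorem pathCost_nonneg {X : Type*} (d : X → X → ℝ) (hd : ∀ x y, 0 ≤ d x y) :
    ∀ (l : List X) (x y : X), 0 ≤ pathCost d x l y := by
  intro l
  induction l with
  | nil => intro x y; exact hd x y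
  | cons a l ih => intro x y; exact le_max_of_le_left (hd x a)

theorem pathCost_pos {X : Type*} (d : X → X → ℝ)
    (hd_nonneg : ∀ x y, 0 ≤ d x y) (hd_eq : ∀ x y, d x y = 0 ↔ x = y) :
    ∀ (l : List X) (x y : X), x ≠ y → 0 < pathCost d x l y := by
  have hpos : ∀ x y : X, x ≠ y → 0 < d x y := by
    intro x y hxy
    rcases lt_or_eq_of_le (hd_nonneg x y) with h | h
    · exact h
    · exact absurd ((hd_eq x y).mp h.symm) hxy
  intro l
  induction l with
  | nil => intro x y hxy; exact hpos x y hxy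
  | cons a l ih =>
    intro x y hxy
    by_cases hxa : x = a
    · subst hxa
      exact lt_max_of_lt_right (ih x y hxy)
    · exact lt_max_of_lt_left (hpos x a hxa)

theorem pathCost_append {X : Type*} (d : X → X → ℝ) :
    ∀ (l m : List X) (x z y : X),
      pathCost d x (l ++ z :: m) y = max (pathCost d x l z) (pathCost d z m y) := by
  intro l
  induction l with
  | nil => intro m x z y; rfl
  | cons a l ih =>
    intro m x z y
    simp only [List.cons_append, pathCost_cons, ih, max_assoc]

theorem pathCost_reverse {X : Type*} (d : X → X → ℝ) (hd_symm : ∀ x y, d x y = d y x) :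
    ∀ (l : List X) (x y : X), pathCost d x l y = pathCost d y l.reverse x := by
  intro l
  induction l with
  | nil => intro x y; exact hd_symm x y
  | cons a l ih =>
    intro x y
    have : (a :: l).reverse = l.reverse ++ a :: [] := by simp
    rw [this, pathCost_append, pathCost_cons, ← ih a y, pathCost_nil, max_comm,
      hd_symm a x]

/-- Existence of the maximal subdominant ultrametric: for every
metric `d` on a finite nonempty set `X` there exists an ultrametric `u ≤ d`
on `X` which dominates every ultrametric on `X` bounded above by `d`. -/
theorem exists_maximal_subdominant_ultrametric
    {X : Type*} [Fintype X] [Nonempty X]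
    (d : X → X → ℝ)
    (hd_nonneg : ∀ x y, 0 ≤ d x y)
    (hd_eq : ∀ x y, d x y = 0 ↔ x = y)
    (hd_symm : ∀ x y, d x y = d y x)
    (hd_tri : ∀ x y z, d x y ≤ d x z + d z y) :
    ∃ u : X → X → ℝ,
      (∀ x y, 0 ≤ u x y) ∧
      (∀ x y, u x y = 0 ↔ x = y) ∧
      (∀ x y, u x y = u y x) ∧
      (∀ x y z, u x y ≤ max (u x z) (u z y)) ∧
      (∀ x y, u x y ≤ d x y) ∧
      (∀ u' : X → X → ℝ,
        (∀ x y, 0 ≤ u' x y) →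
        (∀ x y, u' x y = 0 ↔ x = y) →
        (∀ x y, u' x y = u' y x) →
        (∀ x y z, u' x y ≤ max (u' x z) (u' z y)) →
        (∀ x y, u' x y ≤ d x y) →
        ∀ x y, u' x y ≤ u x y) := by
  classical
  set A : X → X → Set ℝ := fun x y => Set.range (fun l : List X => pathCost d x l y) with hA
  have hAne : ∀ x y, (A x y).Nonempty := fun x y => ⟨d x y, [], rfl⟩
  have hAbdd : ∀ x y, BddBelow (A x y) := by
    intro x y
    exact ⟨0, by rintro c ⟨l, rfl⟩; exact pathCost_nonneg d hd_nonneg l x y⟩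
  have hAfin : ∀ x y, (A x y).Finite := by
    intro x y
    apply Set.Finite.subset (Set.finite_range (fun p : X × X => d p.1 p.2))
    rintro c ⟨l, rfl⟩
    obtain ⟨a, b, hab⟩ := pathCost_mem_range d l x y
    exact ⟨(a, b), hab.symm⟩
  set u : X → X → ℝ := fun x y => sInf (A x y) with hu
  have hu_mem : ∀ x y, ∃ l, pathCost d x l y = u x y := by
    intro x y
    exact (hAne x y).csInf_mem (hAfin x y)
  have hu_le : ∀ (x y : X) (l : List X), u x y ≤ pathCost d x l y := by
    intro x y l
    exact csInf_le (hAbdd x y) ⟨l, rfl⟩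
  have hu_nonneg : ∀ x y, 0 ≤ u x y := by
    intro x y
    apply le_csInf (hAne x y)
    rintro c ⟨l, rfl⟩
    exact pathCost_nonneg d hd_nonneg l x y
  refine ⟨u, hu_nonneg, ?_, ?_, ?_, ?_, ?_⟩
  · -- u x y = 0 ↔ x = y
    intro x y
    constructor
    · intro h0
      by_contra hxy
      obtain ⟨l, hl⟩ := hu_mem x y
      have := pathCost_pos d hd_nonneg hd_eq l x y hxy
      rw [hl, h0] at this
      exact lt_irrefl 0 this
    · rintro rfl
      refine le_antisymm ?_ (hu_nonneg x x)
      have := hu_le x x []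
      rwa [pathCost_nil, (hd_eq x x).mpr rfl] at this
  · -- symmetry
    intro x y
    have key : ∀ a b : X, u a b ≤ u b a := by
      intro a b
      obtain ⟨l, hl⟩ := hu_mem b a
      calc u a b ≤ pathCost d a l.reverse b := hu_le a b l.reverse
        _ = pathCost d b l.reverse.reverse a := pathCost_reverse d hd_symm _ a b
        _ = u b a := by rw [List.reverse_reverse, hl]
    exact le_antisymm (key x y) (key y x)
  · -- strong triangle inequality
    intro x y z
    obtain ⟨l₁, h₁⟩ := hu_mem x z
    obtain ⟨l₂, h₂⟩ := hu_mem z y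
    calc u x y ≤ pathCost d x (l₁ ++ z :: l₂) y := hu_le x y _
      _ = max (pathCost d x l₁ z) (pathCost d z l₂ y) := pathCost_append d l₁ l₂ x z y
      _ = max (u x z) (u z y) := by rw [h₁, h₂]
  · -- u ≤ d
    intro x y
    exact hu_le x y []
  · -- maximality
    intro u' hn he hs ht hle x y
    have key : ∀ (l : List X) (x y : X), u' x y ≤ pathCost d x l y := by
      intro l
      induction l with
      | nil => intro x y; exact hle x y
      | cons a l ih =>
        intro x y
        calc u' x y ≤ max (u' x a) (u' a y) := ht x y a
          _ ≤ max (d x a) (pathCost d a l y) := max_le_max (hle x a) (ih a y)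
          _ = pathCost d x (a :: l) y := rfl
    apply le_csInf (hAne x y)
    rintro c ⟨l, rfl⟩
    exact key l x y
end

section
/- The Hausdorff distance in an ultrametric space satisfies the strong triangle inequality: let Z be a metric space whose distance satisfies the strong triangle inequality d(x,y) ≤ max(d(x,z), d(z,y)) for all x, y, z ∈ Z. Then for all nonempty bounded subsets A, B, C of Z, the Hausdorff distance satisfies d_H(A, B) ≤ max(d_H(A, C), d_H(C, B)). -/
open Metric EMetric

private lemma infDist_ultra_aux {Z : Type*} [MetricSpace Z]
    (hultra : ∀ x y z : Z, dist x y ≤ max (dist x z) (dist z y))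
    {A B C : Set Z} (hB : B.Nonempty) (hC : C.Nonempty)
    (hAC : hausdorffEdist A C ≠ ⊤) (hCB : hausdorffEdist C B ≠ ⊤)
    {x : Z} (hx : x ∈ A) :
    infDist x B ≤ max (hausdorffDist A C) (hausdorffDist C B) := by
  have key : ∀ ε > (0:ℝ), infDist x B ≤ max (hausdorffDist A C) (hausdorffDist C B) + ε := by
    intro ε hε
    have h1 : infDist x C ≤ hausdorffDist A C := infDist_le_hausdorffDist_of_mem hx hAC
    have h2 : infDist x C < hausdorffDist A C + ε/2 := lt_of_le_of_lt h1 (by linarith)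
    obtain ⟨c, hcC, hc⟩ := (infDist_lt_iff hC).1 h2
    have h3 : infDist c B ≤ hausdorffDist C B := infDist_le_hausdorffDist_of_mem hcC hCB
    have h4 : infDist c B < hausdorffDist C B + ε/2 := lt_of_le_of_lt h3 (by linarith)
    obtain ⟨b, hbB, hb⟩ := (infDist_lt_iff hB).1 h4
    calc infDist x B ≤ dist x b := infDist_le_dist_of_mem hbB
      _ ≤ max (dist x c) (dist c b) := hultra x b c
      _ ≤ max (hausdorffDist A C) (hausdorffDist C B) + ε := by
          rcases le_total (dist x c) (dist c b) with h | h
          · rw [max_eq_right h]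
            calc dist c b ≤ hausdorffDist C B + ε/2 := hb.le
              _ ≤ max (hausdorffDist A C) (hausdorffDist C B) + ε := by
                have := le_max_right (hausdorffDist A C) (hausdorffDist C B); linarith
          · rw [max_eq_left h]
            calc dist x c ≤ hausdorffDist A C + ε/2 := hc.le
              _ ≤ max (hausdorffDist A C) (hausdorffDist C B) + ε := by
                have := le_max_left (hausdorffDist A C) (hausdorffDist C B); linarith
  exact le_of_forall_pos_le_add key

/-- The Hausdorff distance in an ultrametric space satisfies the
strong triangle inequality: if the distance of a metric space `Z` satisfies
`d(x,y) ≤ max(d(x,z), d(z,y))` for all `x, y, z`, then for all nonempty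
bounded subsets `A, B, C` of `Z`,
`d_H(A, B) ≤ max(d_H(A, C), d_H(C, B))`. -/
theorem hausdorffDist_strong_triangle
    {Z : Type*} [MetricSpace Z]
    (hultra : ∀ x y z : Z, dist x y ≤ max (dist x z) (dist z y))
    (A B C : Set Z)
    (hA : A.Nonempty) (hB : B.Nonempty) (hC : C.Nonempty)
    (hAb : Bornology.IsBounded A) (hBb : Bornology.IsBounded B)
    (hCb : Bornology.IsBounded C) :
    Metric.hausdorffDist A B ≤
      max (Metric.hausdorffDist A C) (Metric.hausdorffDist C B) := by
  have hAC : hausdorffEdist A C ≠ ⊤ := hausdorffEdist_ne_top_of_nonempty_of_bounded hA hC hAb hCb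
  have hCB : hausdorffEdist C B ≠ ⊤ := hausdorffEdist_ne_top_of_nonempty_of_bounded hC hB hCb hBb
  have hCA : hausdorffEdist C A ≠ ⊤ := by
    have e : hausdorffEdist C A = hausdorffEdist A C := hausdorffEdist_comm; rwa [e]
  have hBC : hausdorffEdist B C ≠ ⊤ := by
    have e : hausdorffEdist B C = hausdorffEdist C B := hausdorffEdist_comm; rwa [e]
  have hnn : 0 ≤ max (hausdorffDist A C) (hausdorffDist C B) :=
    le_max_of_le_left hausdorffDist_nonneg
  refine hausdorffDist_le_of_infDist hnn ?_ ?_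
  · intro x hx
    exact infDist_ultra_aux hultra hB hC hAC hCB hx
  · intro y hy
    have := infDist_ultra_aux (fun a b c => by
        rw [dist_comm a b, dist_comm a c, dist_comm c b, max_comm]
        exact hultra b a c) hA hC hBC hCA hy
    rwa [hausdorffDist_comm (s := B) (t := C), hausdorffDist_comm (s := C) (t := A), max_comm] at this
end
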